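/- arXiv:1303.1395 — 3 statements merged into one kernel-verified Lean document; each statement's English description precedes it below -/
import Mathlib

section
/- The permutation 3241 cannot be sorted by the PS machine (a pop stack followed directly by a stack). -/
/-- One step of the PS machine.  State: (input, pop stack, stack, output);
stacks have their top at the head, output is appended at the end. -/
inductive PSStep : (List ℕ × List ℕ × List ℕ × List ℕ) → (List ℕ × List ℕ × List ℕ × List ℕ) → Prop
  | input (x : ℕ) (inp ps st out : List ℕ) :
      PSStep (x :: inp, ps, st, out) (inp, x :: ps, st, out)
  | transfer (inp ps st out : List ℕ) (h : ps ≠ []) :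
      PSStep (inp, ps, st, out) (inp, [], ps.reverse ++ st, out)
  | output (inp ps st out : List ℕ) (x : ℕ) :
      PSStep (inp, ps, x :: st, out) (inp, ps, st, out ++ [x])

/-- `p` can be sorted by a pop stack followed directly by a stack. -/
def PSSortable (p : List ℕ) : Prop :=
  Relation.ReflTransGen PSStep (p, [], [], []) ([], [], [], List.range' 1 p.length)

abbrev PSState := List ℕ × List ℕ × List ℕ × List ℕ

/-- All successors of a state. -/
def psSuccs : PSState → List PSState
  | (inp, ps, st, out) =>
    (match inp with
      | x :: inp' => [(inp', x :: ps, st, out)]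
      | [] => []) ++
    (if ps = [] then [] else [(inp, [], ps.reverse ++ st, out)]) ++
    (match st with
      | x :: st' => [(inp, ps, st', out ++ [x])]
      | [] => [])

theorem psStep_mem_succs {s t : PSState} (h : PSStep s t) : t ∈ psSuccs s := by
  cases h with
  | input x inp ps st out => simp [psSuccs]
  | transfer inp ps st out h => simp [psSuccs, h]
  | output inp ps st out x =>
      cases inp <;> rcases hps : ps with _ | ⟨a, b⟩ <;> simp [psSuccs]

/-- The set of states reachable from ([3,2,4,1],[],[],[]). -/
def psReach : List PSState := [
([], [], [], [1, 2, 4, 3]),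
  ([], [], [], [1, 3, 2, 4]),
  ([], [], [], [1, 4, 2, 3]),
  ([], [], [], [1, 4, 3, 2]),
  ([], [], [], [2, 1, 4, 3]),
  ([], [], [], [2, 3, 1, 4]),
  ([], [], [], [2, 3, 4, 1]),
  ([], [], [], [2, 4, 1, 3]),
  ([], [], [], [2, 4, 3, 1]),
  ([], [], [], [3, 1, 2, 4]),
  ([], [], [], [3, 1, 4, 2]),
  ([], [], [], [3, 2, 1, 4]),
  ([], [], [], [3, 2, 4, 1]),
  ([], [], [], [3, 4, 1, 2]),
  ([], [], [], [3, 4, 2, 1]),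
  ([], [], [], [4, 1, 2, 3]),
  ([], [], [], [4, 1, 3, 2]),
  ([], [], [], [4, 2, 1, 3]),
  ([], [], [], [4, 2, 3, 1]),
  ([], [], [], [4, 3, 1, 2]),
  ([], [], [], [4, 3, 2, 1]),
  ([], [], [1], [2, 3, 4]),
  ([], [], [1], [2, 4, 3]),
  ([], [], [1], [3, 2, 4]),
  ([], [], [1], [3, 4, 2]),
  ([], [], [1], [4, 2, 3]),
  ([], [], [1], [4, 3, 2]),
  ([], [], [1, 2], [3, 4]),
  ([], [], [1, 2], [4, 3]),
  ([], [], [1, 2, 3], [4]),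
  ([], [], [1, 2, 4], [3]),
  ([], [], [1, 2, 4, 3], []),
  ([], [], [1, 3], [2, 4]),
  ([], [], [1, 3], [4, 2]),
  ([], [], [1, 3, 2], [4]),
  ([], [], [1, 3, 2, 4], []),
  ([], [], [1, 4], [2, 3]),
  ([], [], [1, 4], [3, 2]),
  ([], [], [1, 4, 2], [3]),
  ([], [], [1, 4, 2, 3], []),
  ([], [], [1, 4, 3], [2]),
  ([], [], [1, 4, 3, 2], []),
  ([], [], [2], [1, 4, 3]),
  ([], [], [2], [3, 1, 4]),
  ([], [], [2], [3, 4, 1]),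
  ([], [], [2], [4, 1, 3]),
  ([], [], [2], [4, 3, 1]),
  ([], [], [2, 3], [1, 4]),
  ([], [], [2, 3], [4, 1]),
  ([], [], [2, 4], [1, 3]),
  ([], [], [2, 4], [3, 1]),
  ([], [], [2, 4, 1], [3]),
  ([], [], [2, 4, 1, 3], []),
  ([], [], [2, 4, 3], [1]),
  ([], [], [3], [1, 2, 4]),
  ([], [], [3], [1, 4, 2]),
  ([], [], [3], [2, 1, 4]),
  ([], [], [3], [2, 4, 1]),
  ([], [], [3], [4, 1, 2]),
  ([], [], [3], [4, 2, 1]),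
  ([], [], [3, 2], [1, 4]),
  ([], [], [3, 2], [4, 1]),
  ([], [], [3, 2, 4], [1]),
  ([], [], [3, 2, 4, 1], []),
  ([], [], [4], [1, 3, 2]),
  ([], [], [4], [2, 3, 1]),
  ([], [], [4], [3, 1, 2]),
  ([], [], [4], [3, 2, 1]),
  ([], [], [4, 1], [2, 3]),
  ([], [], [4, 1], [3, 2]),
  ([], [], [4, 1, 2], [3]),
  ([], [], [4, 1, 2, 3], []),
  ([], [], [4, 1, 3], [2]),
  ([], [], [4, 1, 3, 2], []),
  ([], [], [4, 2], [3, 1]),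
  ([], [], [4, 2, 3], [1]),
  ([], [], [4, 3], [1, 2]),
  ([], [], [4, 3], [2, 1]),
  ([], [], [4, 3, 2], [1]),
  ([], [1], [], [2, 3, 4]),
  ([], [1], [], [2, 4, 3]),
  ([], [1], [], [3, 2, 4]),
  ([], [1], [], [3, 4, 2]),
  ([], [1], [], [4, 2, 3]),
  ([], [1], [], [4, 3, 2]),
  ([], [1], [2], [3, 4]),
  ([], [1], [2], [4, 3]),
  ([], [1], [2, 3], [4]),
  ([], [1], [2, 4], [3]),
  ([], [1], [2, 4, 3], []),
  ([], [1], [3], [2, 4]),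
  ([], [1], [3], [4, 2]),
  ([], [1], [3, 2], [4]),
  ([], [1], [3, 2, 4], []),
  ([], [1], [4], [2, 3]),
  ([], [1], [4], [3, 2]),
  ([], [1], [4, 2], [3]),
  ([], [1], [4, 2, 3], []),
  ([], [1], [4, 3], [2]),
  ([], [1], [4, 3, 2], []),
  ([], [1, 4], [], [2, 3]),
  ([], [1, 4], [], [3, 2]),
  ([], [1, 4], [2], [3]),
  ([], [1, 4], [2, 3], []),
  ([], [1, 4], [3], [2]),
  ([], [1, 4], [3, 2], []),
  ([], [1, 4, 2], [], [3]),
  ([], [1, 4, 2], [3], []),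
  ([], [1, 4, 2, 3], [], []),
  ([1], [], [], [2, 3, 4]),
  ([1], [], [], [2, 4, 3]),
  ([1], [], [], [3, 2, 4]),
  ([1], [], [], [3, 4, 2]),
  ([1], [], [], [4, 2, 3]),
  ([1], [], [], [4, 3, 2]),
  ([1], [], [2], [3, 4]),
  ([1], [], [2], [4, 3]),
  ([1], [], [2, 3], [4]),
  ([1], [], [2, 4], [3]),
  ([1], [], [2, 4, 3], []),
  ([1], [], [3], [2, 4]),
  ([1], [], [3], [4, 2]),
  ([1], [], [3, 2], [4]),
  ([1], [], [3, 2, 4], []),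
  ([1], [], [4], [2, 3]),
  ([1], [], [4], [3, 2]),
  ([1], [], [4, 2], [3]),
  ([1], [], [4, 2, 3], []),
  ([1], [], [4, 3], [2]),
  ([1], [], [4, 3, 2], []),
  ([1], [4], [], [2, 3]),
  ([1], [4], [], [3, 2]),
  ([1], [4], [2], [3]),
  ([1], [4], [2, 3], []),
  ([1], [4], [3], [2]),
  ([1], [4], [3, 2], []),
  ([1], [4, 2], [], [3]),
  ([1], [4, 2], [3], []),
  ([1], [4, 2, 3], [], []),
  ([2, 4, 1], [], [], [3]),
  ([2, 4, 1], [], [3], []),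
  ([2, 4, 1], [3], [], []),
  ([3, 2, 4, 1], [], [], []),
  ([4, 1], [], [], [2, 3]),
  ([4, 1], [], [], [3, 2]),
  ([4, 1], [], [2], [3]),
  ([4, 1], [], [2, 3], []),
  ([4, 1], [], [3], [2]),
  ([4, 1], [], [3, 2], []),
  ([4, 1], [2], [], [3]),
  ([4, 1], [2], [3], []),
  ([4, 1], [2, 3], [], [])
]

set_option maxRecDepth 10000 in
theorem psReach_closed : ∀ s ∈ psReach, ∀ t ∈ psSuccs s, t ∈ psReach := by decide

theorem reach_invariant {t : PSState} (h : Relation.ReflTransGen PSStep (([3,2,4,1] : List ℕ), [], [], []) t) :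
    t ∈ psReach := by
  induction h with
  | refl => decide
  | tail _ hstep ih => exact psReach_closed _ ih _ (psStep_mem_succs hstep)

theorem stmt2 : ¬ PSSortable [3, 2, 4, 1] := by
  intro h
  have := reach_invariant h
  revert this
  decide
end

section
/- The only simple permutations avoiding both 2431 and 3142 are 1, 12, 21, and the parallel alternations 2,4,6,...,2m,1,3,5,...,2m−1 for m ≥ 2. -/
/-- `u` and `v` have the same length and are order isomorphic (same relative order of entries). -/
def OrderIsoList (u v : List ℕ) : Prop :=
  u.length = v.length ∧ ∀ i j, i < u.length → j < u.length →
    (u.getD i 0 < u.getD j 0 ↔ v.getD i 0 < v.getD j 0)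

/-- `p` contains the pattern `q`: some subsequence of `p` is order isomorphic to `q`. -/
def ContainsPat (p q : List ℕ) : Prop := ∃ s : List ℕ, s.Sublist p ∧ OrderIsoList s q

def AvoidsPat (p q : List ℕ) : Prop := ¬ ContainsPat p q

/-- `p` is a permutation of the values `1, …, p.length`. -/
def IsPermList (p : List ℕ) : Prop := p.Perm (List.range' 1 p.length)

/-- The parallel alternation `2, 4, …, 2m, 1, 3, …, 2m-1` (in one-line list form). -/
def parAlt (m : ℕ) : List ℕ :=
  ((List.range' 1 m).map (fun i => 2 * i)) ++ ((List.range' 1 m).map (fun i => 2 * i - 1))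

/-- The `len` consecutive positions of `p` starting at `i` carry consecutive values,
i.e. they form an interval (block) of `p`. -/
def SegIsInterval (p : List ℕ) (i len : ℕ) : Prop :=
  ∃ a, ((p.drop i).take len).Perm (List.range' a len)

/-- `p` is simple: no set of consecutive positions of size strictly between 1 and
`p.length` carries consecutive values. -/
def IsSimpleList (p : List ℕ) : Prop :=
  ∀ i len, i + len ≤ p.length → 2 ≤ len → len < p.length → ¬ SegIsInterval p i len

private lemma monoAux (f : ℕ → ℕ) : ∀ (b a : ℕ), a ≤ b → (∀ k, a ≤ k → k < b → f k < f (k+1)) → f a ≤ f b := by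
  intro b
  induction b with
  | zero =>
    intro a ha _
    have : a = 0 := by omega
    subst this; exact le_refl _
  | succ b ih =>
    intro a ha hstep
    rcases Nat.lt_or_ge a (b+1) with h | h
    · have h1 : f a ≤ f b := ih a (by omega) (fun k hk1 hk2 => hstep k hk1 (by omega))
      have h2 : f b < f (b+1) := hstep b (by omega) (by omega)
      omega
    · have : a = b + 1 := by omega
      subst this; exact le_refl _

theorem corePerm (n : ℕ) (f : ℕ → ℕ) (hn : 3 ≤ n)
    (hb : ∀ k, k < n → 1 ≤ f k ∧ f k ≤ n)
    (hinj : ∀ a b, a < n → b < n → f a = f b → a = b)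
    (hsurj : ∀ v, 1 ≤ v → v ≤ n → ∃ k, k < n ∧ f k = v)
    (hK1 : ∀ a b c d, a < b → b < c → c < d → d < n → f d < f a → f a < f c → f c < f b → False)
    (hK2 : ∀ a b c d, a < b → b < c → c < d → d < n → f b < f d → f d < f a → f a < f c → False)
    (hKI : ∀ i j lo hi, i < j → j < n → (0 < i ∨ j + 1 < n) →
      (∀ k, i ≤ k → k ≤ j → lo ≤ f k ∧ f k ≤ hi) →
      (∀ v, lo ≤ v → v ≤ hi → ∃ k, i ≤ k ∧ k ≤ j ∧ f k = v) → False) :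
    ∃ m, 2 ≤ m ∧ n = 2 * m ∧ (∀ k, k < m → f k = 2*k+2) ∧ (∀ k, k < m → f (m+k) = 2*k+1) := by
  -- a descent exists
  have hdesc : ∃ k, k + 1 < n ∧ f (k+1) < f k := by
    by_contra h
    push_neg at h
    have hstep : ∀ k, k + 1 < n → f k < f (k+1) := by
      intro k hk
      have h1 := h k hk
      have h2 : f k ≠ f (k+1) := fun he => by
        have := hinj k (k+1) (by omega) hk he; omega
      omega
    have hmono : ∀ a b, a ≤ b → b < n → f a ≤ f b :=
      fun a b hab hbn => monoAux f b a hab (fun k hk1 hk2 => hstep k (by omega))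
    have hf0 : f 0 = 1 := by
      obtain ⟨q, hq, hfq⟩ := hsurj 1 (by omega) (by omega)
      have := hmono 0 q (by omega) hq
      have := (hb 0 (by omega)).1
      omega
    have hf1 : f 1 = 2 := by
      obtain ⟨q, hq, hfq⟩ := hsurj 2 (by omega) (by omega)
      rcases Nat.lt_or_ge q 2 with h2 | h2
      · interval_cases q <;> omega
      · have := hmono 1 q (by omega) hq
        have := hstep 0 (by omega)
        simp only [Nat.zero_add] at this
        omega
    exact hKI 0 1 1 2 (by omega) (by omega) (by omega)
      (by intro k hk1 hk2; interval_cases k <;> omega)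
      (by
        intro v hv1 hv2
        rcases (by omega : v = 1 ∨ v = 2) with h | h
        · exact ⟨0, by omega, by omega, by omega⟩
        · exact ⟨1, by omega, by omega, by omega⟩)
  
  classical
  obtain ⟨c, hcn, hcd, hclast⟩ :
      ∃ c, c + 1 < n ∧ f (c+1) < f c ∧ ∀ k, c < k → k + 1 < n → f k < f (k+1) := by
    obtain ⟨k0, hk0n, hk0d⟩ := hdesc
    have hk0P : (fun k => k + 1 < n ∧ f (k+1) < f k) k0 := ⟨hk0n, hk0d⟩
    have hsp := Nat.findGreatest_spec (P := fun k => k + 1 < n ∧ f (k+1) < f k)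
      (n := n - 2) (m := k0) (by omega) hk0P
    refine ⟨Nat.findGreatest (fun k => k + 1 < n ∧ f (k+1) < f k) (n-2), hsp.1, hsp.2, ?_⟩
    · intro k hk hkn
      have hnP := Nat.findGreatest_is_greatest (P := fun k => k + 1 < n ∧ f (k+1) < f k)
        hk (by omega : k ≤ n - 2)
      simp only [not_and] at hnP
      have h1 : ¬ f (k+1) < f k := hnP hkn
      have hne : f k ≠ f (k+1) := fun he => by have := hinj k (k+1) (by omega) hkn he; omega
      omega
  have htail : ∀ a b, c < a → a ≤ b → b < n → f a ≤ f b := by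
    intro a b ha hab hbn
    exact monoAux f b a hab (fun k hk1 hk2 => hclast k (by omega) (by omega))
  -- Lemma A : f c = n and f (c+1) = 1
  have hA : f c = n ∧ f (c+1) = 1 := by
    obtain ⟨r, hrc, hrW, hrmin⟩ :
        ∃ r, r ≤ c ∧ (∀ k, r ≤ k → k < c → f (c+1) < f k ∧ f k < f c) ∧
          (∀ a, a < c → f (c+1) < f a → f a < f c → r ≤ a) := by
      by_cases hY : ∃ a, a < c ∧ f (c+1) < f a ∧ f a < f c
      · obtain ⟨r, hr1, hr2, hr3, hrle⟩ :
            ∃ r, r < c ∧ f (c+1) < f r ∧ f r < f c ∧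
              ∀ a, a < c → f (c+1) < f a → f a < f c → r ≤ a := by
          obtain ⟨h1', h2', h3'⟩ := Nat.find_spec hY
          exact ⟨Nat.find hY, h1', h2', h3', fun a h1 h2 h3 => Nat.find_le ⟨h1, h2, h3⟩⟩
        refine ⟨r, by omega, ?_, ?_⟩
        · intro k hk1 hk2
          rcases Nat.eq_or_lt_of_le hk1 with hrk | hrk
          · subst hrk; exact ⟨hr2, hr3⟩
          rcases Nat.lt_trichotomy (f k) (f c) with h | h | h
          · rcases Nat.lt_trichotomy (f k) (f (c+1)) with h' | h' | h'
            · exact absurd (hK2 r k c (c+1) hrk hk2 (by omega) (by omega) h' hr2 hr3) id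
            · have := hinj k (c+1) (by omega) (by omega) h'; omega
            · exact ⟨h', h⟩
          · have := hinj k c (by omega) (by omega) h; omega
          · exact absurd (hK1 r k c (c+1) hrk hk2 (by omega) (by omega) hr2 hr3 h) id
        · exact hrle
      · refine ⟨c, le_refl _, ?_, ?_⟩
        · intro k hk1 hk2; omega
        · intro a ha h1 h2; exact absurd ⟨a, ha, h1, h2⟩ hY
    obtain ⟨e, hce, hen, hfe, hetop⟩ :
        ∃ e, c + 1 ≤ e ∧ e < n ∧ f e < f c ∧ ∀ q, e < q → q < n → f c < f q := by
      have hQ1 : (fun k => c + 1 ≤ k ∧ k < n ∧ f k < f c) (c+1) := ⟨le_refl _, by omega, hcd⟩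
      have hsp := Nat.findGreatest_spec (m := c+1) (n := n-1)
        (P := fun k => c + 1 ≤ k ∧ k < n ∧ f k < f c) (by omega) hQ1
      refine ⟨Nat.findGreatest (fun k => c + 1 ≤ k ∧ k < n ∧ f k < f c) (n-1),
        Nat.le_findGreatest (n := n-1) (by omega) hQ1, hsp.2.1, hsp.2.2, ?_⟩
      intro q hq hqn
      have hnq := Nat.findGreatest_is_greatest (P := fun k => c + 1 ≤ k ∧ k < n ∧ f k < f c)
        hq (by omega : q ≤ n - 1)
      simp only [not_and] at hnq
      have h1 : ¬ f q < f c := hnq (by omega) hqn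
      have h2 : f q ≠ f c := fun he' => by have := hinj q c hqn (by omega) he'; omega
      omega
    have hcont : ∀ k, r ≤ k → k ≤ e → f (c+1) ≤ f k ∧ f k ≤ f c := by
      intro k hk1 hk2
      rcases Nat.lt_trichotomy k c with h | h | h
      · have := hrW k hk1 h; omega
      · subst h; omega
      · have h1 := htail (c+1) k (by omega) (by omega) (by omega)
        have h2 := htail k e (by omega) hk2 hen
        omega
    have hcover : ∀ v, f (c+1) ≤ v → v ≤ f c → ∃ k, r ≤ k ∧ k ≤ e ∧ f k = v := by
      intro v hv1 hv2
      rcases Nat.eq_or_lt_of_le hv1 with h | h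
      · exact ⟨c+1, by omega, by omega, by omega⟩
      rcases Nat.eq_or_lt_of_le hv2 with h' | h'
      · exact ⟨c, by omega, by omega, by omega⟩
      · obtain ⟨q, hqn, hfq⟩ := hsurj v (by have := (hb (c+1) hcn).1; omega)
          (by have := (hb c (by omega)).2; omega)
        rcases Nat.lt_trichotomy q c with hq | hq | hq
        · exact ⟨q, hrmin q hq (by omega) (by omega), by omega, hfq⟩
        · subst hq; omega
        · have hqe : q ≤ e := by
            by_contra hh
            have := hetop q (by omega) hqn
            omega
          exact ⟨q, by omega, hqe, hfq⟩
    by_cases hre : r = 0 ∧ e = n - 1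
    · have hall : ∀ k, k < n → f (c+1) ≤ f k ∧ f k ≤ f c := by
        intro k hk; exact hcont k (by omega) (by omega)
      constructor
      · obtain ⟨q, hq, hfq⟩ := hsurj n (by omega) (by omega)
        have := (hall q hq).2
        have := (hb c (by omega)).2
        omega
      · obtain ⟨q, hq, hfq⟩ := hsurj 1 (by omega) (by omega)
        have := (hall q hq).1
        have := (hb (c+1) hcn).1
        omega
    · exact absurd (hKI r e (f (c+1)) (f c) (by omega) hen (by omega) hcont hcover) id
  obtain ⟨hfc, hfc1⟩ := hA
  -- Lemma B : no descent before c
  have hB : ∀ i0, i0 < c → ¬ f (i0+1) < f i0 := by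
    intro i0 hi0c hi0d
    obtain ⟨i, hile, hin, hid, himin⟩ :
        ∃ i, i ≤ i0 ∧ i + 1 < n ∧ f (i+1) < f i ∧ ∀ k, k < i → ¬ f (k+1) < f k := by
      have hEx : ∃ k, k + 1 < n ∧ f (k+1) < f k := ⟨i0, by omega, hi0d⟩
      obtain ⟨hin, hid⟩ := Nat.find_spec hEx
      exact ⟨Nat.find hEx, Nat.find_le ⟨by omega, hi0d⟩, hin, hid,
        fun k hk hd => Nat.find_min hEx hk ⟨by omega, hd⟩⟩
    have hic : i < c := by omega
    have hpre : ∀ a b, a ≤ b → b ≤ i → f a ≤ f b := by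
      intro a b hab hbi
      refine monoAux f b a hab (fun k hk1 hk2 => ?_)
      have hnd := himin k (by omega)
      have : f k ≠ f (k+1) := fun he => by have := hinj k (k+1) (by omega) (by omega) he; omega
      omega
    have hi1c : i + 1 < c := by
      rcases Nat.eq_or_lt_of_le (by omega : i + 1 ≤ c) with h | h
      · exfalso
        have h2 : f (i+1) = n := by rw [h, hfc]
        have := (hb i (by omega)).2
        omega
      · exact h
    have hB1 : ∀ a t d, a < t → t < d → d ≤ c → f a < f d → f d < f t → False := by
      intro a t d h1 h2 h3 h4 h5
      have ha1 : 1 < f a := by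
        have hb1 := (hb a (by omega)).1
        rcases Nat.eq_or_lt_of_le hb1 with h' | h'
        · exfalso
          have := hinj a (c+1) (by omega) (by omega) (by omega)
          omega
        · omega
      exact hK1 a t d (c+1) h1 h2 (by omega) (by omega) (by omega) h4 h5
    have hB2 : ∀ a t q, a < t → t < c → f t < f a → c < q → q < n → f t < f q → f q < f a → False := by
      intro a t q h1 h2 h3 h4 h5 h6 h7
      have hfan : f a < n := by
        have h8 := (hb a (by omega)).2
        rcases Nat.eq_or_lt_of_le h8 with h' | h'
        · exfalso
          have := hinj a c (by omega) (by omega) (by omega)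
          omega
        · exact h'
      exact hK2 a t c q h1 h2 h4 h5 h6 h7 (by omega)
    have hrule : ∀ q, i < q → q ≤ c → f 0 ≤ f q → f q ≤ f i → False := by
      intro q hq1 hq2 hq3 hq4
      have hne0 : f q ≠ f 0 := fun he => by
        have := hinj q 0 (by omega) (by omega) he; omega
      have hnei : f q ≠ f i := fun he => by
        have := hinj q i (by omega) (by omega) he; omega
      rcases Nat.eq_zero_or_pos i with h | h
      · rw [h] at hq4; omega
      · exact hB1 0 i q (by omega) hq1 hq2 (by omega) (by omega)
    have hB4 : f (i+1) < f 0 := by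
      by_contra hh
      push_neg at hh
      exact hrule (i+1) (by omega) (by omega) hh (by omega)
    have hgap : ∀ v, f 0 ≤ v → v ≤ f i → ∃ a, a ≤ i ∧ f a = v := by
      intro v h1 h2
      obtain ⟨q, hq, hfq⟩ := hsurj v (by have := (hb 0 (by omega)).1; omega)
        (by have := (hb i (by omega)).2; omega)
      rcases le_or_gt q i with h | h
      · exact ⟨q, h, hfq⟩
      exfalso
      rcases le_or_gt q c with hqc | hqc
      · exact hrule q h hqc (by omega) (by omega)
      rcases Nat.eq_or_lt_of_le (by omega : c + 1 ≤ q) with h' | h'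
      · have hv1 : v = 1 := by rw [← hfq, ← h', hfc1]
        have := (hb 0 (by omega)).1
        have : f 0 = 1 := by omega
        have := hinj 0 (c+1) (by omega) (by omega) (by omega)
        omega
      · have hnei : f q ≠ f i := fun he => by
          have := hinj q i (by omega) (by omega) he; omega
        exact hB2 i (i+1) q (by omega) hi1c hid (by omega) hq (by omega) (by omega)
    by_cases hM : ∃ t, i + 1 < t ∧ t ≤ c ∧ f (i+1) < f t ∧ f t < f 0
    · obtain ⟨t, hb1', hb2', hb3', hb4', htmin⟩ :
          ∃ t, i + 1 < t ∧ t ≤ c ∧ f (i+1) < f t ∧ f t < f 0 ∧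
            ∀ q, q < t → ¬ (i + 1 < q ∧ q ≤ c ∧ f (i+1) < f q ∧ f q < f 0) := by
        obtain ⟨h1', h2', h3', h4'⟩ := Nat.find_spec hM
        exact ⟨Nat.find hM, h1', h2', h3', h4', fun q hq => Nat.find_min hM hq⟩
      have htn : t < n := by omega
      -- f t = f (i+1) + 1
      have hvv : f t = f (i+1) + 1 := by
        by_contra hh
        have hw : f (i+1) + 1 < f t := by omega
        set w := f (i+1) + 1 with hwdef
        obtain ⟨q, hq, hfq⟩ := hsurj w (by omega) (by have := (hb t (by omega)).2; omega)
        rcases le_or_gt q i with h | h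
        · have := hpre 0 q (by omega) h
          have := hpre q i h (le_refl _)
          omega
        rcases Nat.eq_or_lt_of_le (by omega : i + 1 ≤ q) with h' | h'
        · rw [← h'] at hfq; omega
        have hne0' : f q ≠ f 0 := fun he => by
          have := hinj q 0 (by omega) (by omega) he; omega
        rcases Nat.lt_trichotomy q t with h'' | h'' | h''
        · exact htmin q h'' ⟨h', by omega, by omega, by omega⟩
        · rw [h''] at hfq; omega
        rcases le_or_gt q c with hqc | hqc
        · exact hB1 (i+1) t q (by omega) h'' hqc (by omega) (by omega)
        rcases Nat.eq_or_lt_of_le (by omega : c + 1 ≤ q) with h3 | h3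
        · have hv1' : w = 1 := by rw [← hfq, ← h3, hfc1]
          have := (hb (i+1) (by omega)).1
          omega
        · have := hpre 0 i (by omega) (le_refl _)
          exact hB2 i (i+1) q (by omega) hi1c hid (by omega) hq (by omega) (by omega)
      by_cases hE : ∃ e2, i + 1 < e2 ∧ e2 < t ∧ f i < f e2
      · obtain ⟨e2, he1, he2, he3⟩ := hE
        have := hpre 0 i (by omega) (le_refl _)
        exact hK2 i (i+1) e2 t (by omega) he1 he2 (by omega) (by omega) (by omega) he3
      · push_neg at hE
        have hsmall : ∀ q, i + 1 < q → q < t → f q < f (i+1) := by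
          intro q h1 h2
          have h3 := hE q h1 h2
          by_contra hh
          push_neg at hh
          have hne : f q ≠ f (i+1) := fun he => by
            have := hinj q (i+1) (by omega) (by omega) he; omega
          rcases Nat.lt_or_ge (f q) (f 0) with h5 | h5
          · exact htmin q h2 ⟨h1, by omega, by omega, h5⟩
          · exact hrule q (by omega) (by omega) h5 h3
        by_cases ht2 : t = i + 2
        · refine hKI (i+1) (i+2) (f (i+1)) (f t) (by omega) (by omega) (Or.inl (by omega)) ?_ ?_
          · intro k hk1 hk2
            have : k = i + 1 ∨ k = i + 2 := by omega
            rcases this with h | h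
            · subst h; omega
            · subst h; rw [← ht2]; omega
          · intro v hv1 hv2
            rcases Nat.eq_or_lt_of_le hv1 with h | h
            · exact ⟨i+1, by omega, by omega, by omega⟩
            · exact ⟨i+2, by omega, by omega, by rw [← ht2]; omega⟩
        · obtain ⟨x, hxmem, hxmin⟩ := Finset.exists_min_image (Finset.Ioo (i+1) t) f
            ⟨i+2, by simp [Finset.mem_Ioo]; omega⟩
          simp only [Finset.mem_Ioo] at hxmem
          obtain ⟨hx1, hx2⟩ := hxmem
          have hxmin' : ∀ y, i + 1 < y → y < t → f x ≤ f y := by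
            intro y h1 h2
            exact hxmin y (by simp [Finset.mem_Ioo]; omega)
          have hmu : f x < f (i+1) := hsmall x hx1 hx2
          have hcov2 : ∀ w, f x < w → w < f (i+1) → ∃ k, i + 1 ≤ k ∧ k ≤ t ∧ f k = w := by
            intro w h1 h2
            obtain ⟨q, hq, hfq⟩ := hsurj w (by have := (hb x (by omega)).1; omega)
              (by have := (hb (i+1) (by omega)).2; omega)
            rcases le_or_gt q i with h | h
            · exfalso
              have := hpre 0 q (by omega) h
              have := hpre q i h (le_refl _)
              omega
            rcases le_or_gt q t with h' | h'
            · exact ⟨q, by omega, h', hfq⟩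
            exfalso
            rcases le_or_gt q c with hqc | hqc
            · exact hK2 (i+1) x t q hx1 hx2 h' (by omega) (by omega) (by omega) (by omega)
            rcases Nat.eq_or_lt_of_le (by omega : c + 1 ≤ q) with h3 | h3
            · have : w = 1 := by rw [← hfq, ← h3, hfc1]
              have := (hb x (by omega)).1
              omega
            · exact hB2 (i+1) x q hx1 (by omega) hmu (by omega) hq (by omega) (by omega)
          refine hKI (i+1) t (f x) (f t) (by omega) (by omega) (Or.inl (by omega)) ?_ ?_
          · intro k hk1 hk2
            rcases Nat.eq_or_lt_of_le hk1 with h | h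
            · rw [← h]; omega
            rcases Nat.eq_or_lt_of_le hk2 with h' | h'
            · rw [h']; omega
            · have := hxmin' k h h'
              have := hsmall k h h'
              omega
          · intro v hv1 hv2
            rcases Nat.eq_or_lt_of_le hv1 with h | h
            · exact ⟨x, by omega, by omega, by omega⟩
            rcases Nat.eq_or_lt_of_le hv2 with h' | h'
            · exact ⟨t, by omega, by omega, by omega⟩
            rcases Nat.lt_trichotomy v (f (i+1)) with h'' | h'' | h''
            · obtain ⟨k, hk1, hk2, hk3⟩ := hcov2 v h h''
              exact ⟨k, hk1, hk2, hk3⟩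
            · exact ⟨i+1, by omega, by omega, by omega⟩
            · omega
    · push_neg at hM
      refine hKI 0 (i+1) (f (i+1)) (f i) (by omega) (by omega) (Or.inr (by omega)) ?_ ?_
      · intro k hk1 hk2
        rcases Nat.eq_or_lt_of_le hk2 with h | h
        · rw [h]; omega
        · have h1 := hpre 0 k (by omega) (by omega)
          have h2 := hpre k i (by omega) (by omega)
          omega
      · intro v hv1 hv2
        rcases Nat.eq_or_lt_of_le hv1 with h | h
        · exact ⟨i+1, by omega, by omega, by omega⟩
        rcases Nat.lt_or_ge v (f 0) with h' | h'
        · exfalso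
          obtain ⟨q, hq, hfq⟩ := hsurj v (by have := (hb (i+1) (by omega)).1; omega)
            (by have := (hb i (by omega)).2; omega)
          rcases le_or_gt q i with h2 | h2
          · have := hpre 0 q (by omega) h2
            omega
          rcases Nat.eq_or_lt_of_le (by omega : i + 1 ≤ q) with h3 | h3
          · rw [← h3] at hfq; omega
          rcases le_or_gt q c with hqc | hqc
          · have := hM q h3 hqc (by omega); omega
          rcases Nat.eq_or_lt_of_le (by omega : c + 1 ≤ q) with h4 | h4
          · have hv1' : v = 1 := by rw [← hfq, ← h4, hfc1]
            have := (hb (i+1) (by omega)).1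
            omega
          · have := hpre 0 i (by omega) (le_refl _)
            exact hB2 i (i+1) q (by omega) hi1c hid (by omega) hq (by omega) (by omega)
        · obtain ⟨a, ha1, ha2⟩ := hgap v h' hv2
          exact ⟨a, by omega, by omega, ha2⟩
  -- unique descent
  have hasc : ∀ k, k + 1 < n → k ≠ c → f k < f (k+1) := by
    intro k hk hkc
    rcases Nat.lt_or_ge k c with h | h
    · by_contra hh
      have hne : f k ≠ f (k+1) := fun he => by
        have := hinj k (k+1) (by omega) (by omega) he; omega
      exact hB k h (by omega)
    · exact hclast k (by omega) hk
  have hpre : ∀ a b, a ≤ b → b ≤ c → f a ≤ f b := by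
    intro a b hab hbc
    exact monoAux f b a hab (fun k h1 h2 => hasc k (by omega) (by omega))
  -- run steps are +2
  have hstepA : ∀ k, k < c → f (k+1) = f k + 2 := by
    intro k hkc
    have h1 : f k < f (k+1) := hasc k (by omega) (by omega)
    have h2 : f (k+1) ≠ f k + 1 := by
      intro hh
      refine hKI k (k+1) (f k) (f (k+1)) (by omega) (by omega) (Or.inr (by omega)) ?_ ?_
      · intro k' h1' h2'
        have : k' = k ∨ k' = k + 1 := by omega
        rcases this with h | h <;> subst h <;> omega
      · intro v hv1 hv2
        rcases Nat.eq_or_lt_of_le hv1 with h | h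
        · exact ⟨k, by omega, by omega, by omega⟩
        · exact ⟨k+1, by omega, by omega, by omega⟩
    by_contra hh
    have h3 : f k + 2 < f (k+1) := by omega
    have hub : f (k+1) ≤ n := (hb (k+1) (by omega)).2
    obtain ⟨q1, hq1n, hfq1⟩ := hsurj (f k + 1) (by omega) (by omega)
    obtain ⟨q2, hq2n, hfq2⟩ := hsurj (f k + 2) (by omega) (by omega)
    have hq1c : c < q1 := by
      by_contra hh1
      push_neg at hh1
      rcases le_or_gt q1 k with h | h
      · have := hpre q1 k h (by omega); omega
      · have := hpre (k+1) q1 h hh1; omega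
    have hq2c : c < q2 := by
      by_contra hh1
      push_neg at hh1
      rcases le_or_gt q2 k with h | h
      · have := hpre q2 k h (by omega); omega
      · have := hpre (k+1) q2 h hh1; omega
    have hq12 : q1 < q2 := by
      rcases Nat.lt_trichotomy q1 q2 with h | h | h
      · exact h
      · exfalso; rw [h] at hfq1; omega
      · exfalso; have := htail q2 q1 hq2c (by omega) hq1n; omega
    have hadj : q2 = q1 + 1 := by
      by_contra hh1
      have ha1 : f q1 < f (q1+1) := hclast q1 hq1c (by omega)
      have ha2 : f (q1+1) ≤ f q2 := htail (q1+1) q2 (by omega) (by omega) hq2n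
      have hne : f (q1+1) ≠ f q2 := fun he => by
        have := hinj (q1+1) q2 (by omega) hq2n he; omega
      omega
    refine hKI q1 q2 (f k + 1) (f k + 2) hq12 hq2n (Or.inl (by omega)) ?_ ?_
    · intro k' h1' h2'
      have : k' = q1 ∨ k' = q2 := by omega
      rcases this with h | h <;> subst h <;> omega
    · intro v hv1 hv2
      rcases Nat.eq_or_lt_of_le hv1 with h | h
      · exact ⟨q1, by omega, by omega, by omega⟩
      · exact ⟨q2, by omega, by omega, by omega⟩
  have hstepB : ∀ k, c < k → k + 1 < n → f (k+1) = f k + 2 := by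
    intro k hck hkn
    have h1 : f k < f (k+1) := hclast k hck hkn
    have h2 : f (k+1) ≠ f k + 1 := by
      intro hh
      refine hKI k (k+1) (f k) (f (k+1)) (by omega) (by omega) (Or.inl (by omega)) ?_ ?_
      · intro k' h1' h2'
        have : k' = k ∨ k' = k + 1 := by omega
        rcases this with h | h <;> subst h <;> omega
      · intro v hv1 hv2
        rcases Nat.eq_or_lt_of_le hv1 with h | h
        · exact ⟨k, by omega, by omega, by omega⟩
        · exact ⟨k+1, by omega, by omega, by omega⟩
    by_contra hh
    have h3 : f k + 2 < f (k+1) := by omega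
    have hub : f (k+1) ≤ n := (hb (k+1) (by omega)).2
    obtain ⟨q1, hq1n, hfq1⟩ := hsurj (f k + 1) (by omega) (by omega)
    obtain ⟨q2, hq2n, hfq2⟩ := hsurj (f k + 2) (by omega) (by omega)
    have hq1c : q1 ≤ c := by
      by_contra hh1
      push_neg at hh1
      rcases le_or_gt q1 k with h | h
      · have := htail q1 k hh1 h (by omega); omega
      · have := htail (k+1) q1 (by omega) h hq1n; omega
    have hq2c : q2 ≤ c := by
      by_contra hh1
      push_neg at hh1
      rcases le_or_gt q2 k with h | h
      · have := htail q2 k hh1 h (by omega); omega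
      · have := htail (k+1) q2 (by omega) h hq2n; omega
    have hq12 : q1 < q2 := by
      rcases Nat.lt_trichotomy q1 q2 with h | h | h
      · exact h
      · exfalso; rw [h] at hfq1; omega
      · exfalso; have := hpre q2 q1 (by omega) hq1c; omega
    have hadj : q2 = q1 + 1 := by
      by_contra hh1
      have ha1 : f q1 < f (q1+1) := hasc q1 (by omega) (by omega)
      have ha2 : f (q1+1) ≤ f q2 := hpre (q1+1) q2 (by omega) hq2c
      have hne : f (q1+1) ≠ f q2 := fun he => by
        have := hinj (q1+1) q2 (by omega) (by omega) he; omega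
      omega
    refine hKI q1 q2 (f k + 1) (f k + 2) hq12 (by omega) (Or.inr (by omega)) ?_ ?_
    · intro k' h1' h2'
      have : k' = q1 ∨ k' = q2 := by omega
      rcases this with h | h <;> subst h <;> omega
    · intro v hv1 hv2
      rcases Nat.eq_or_lt_of_le hv1 with h | h
      · exact ⟨q1, by omega, by omega, by omega⟩
      · exact ⟨q2, by omega, by omega, by omega⟩
  -- explicit formulas
  have hfA : ∀ k, k ≤ c → f k = f 0 + 2 * k := by
    intro k
    induction k with
    | zero => intro _; omega
    | succ k ih =>
      intro hk
      have h1 := ih (by omega)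
      have h2 := hstepA k (by omega)
      omega
  have hfB : ∀ j, c + 1 + j < n → f (c+1+j) = 1 + 2 * j := by
    intro j
    induction j with
    | zero => intro _; simpa using hfc1
    | succ j ih =>
      intro hj
      have h1 := ih (by omega)
      have h2 := hstepB (c+1+j) (by omega) (by omega)
      have he : c + 1 + (j + 1) = (c + 1 + j) + 1 := by omega
      rw [he, h2, h1]
      omega
  have hf0ge : 2 ≤ f 0 := by
    have h1 := (hb 0 (by omega)).1
    rcases Nat.eq_or_lt_of_le h1 with h | h
    · exfalso
      have := hinj 0 (c+1) (by omega) (by omega) (by omega)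
      omega
    · omega
  have hf0 : f 0 = 2 := by
    by_contra hh
    obtain ⟨q, hq, hfq⟩ := hsurj 2 (by omega) (by omega)
    rcases le_or_gt q c with h | h
    · have := hfA q h; omega
    · have h2 := hfB (q - c - 1) (by omega)
      rw [show c + 1 + (q - c - 1) = q from by omega] at h2
      omega
  have hnc : n = 2 * c + 2 := by
    have := hfA c (le_refl _)
    omega
  have hc1 : 1 ≤ c := by omega
  refine ⟨c + 1, by omega, by omega, ?_, ?_⟩
  · intro k hk
    have := hfA k (by omega)
    omega
  · intro k hk
    have h2 := hfB k (by omega)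
    rw [show c + 1 + k = (c+1) + k from rfl] at h2
    omega

private lemma iso2431 (w1 w2 w3 w4 : ℕ) (h1 : w4 < w1) (h2 : w1 < w3) (h3 : w3 < w2) :
    OrderIsoList [w1, w2, w3, w4] [2, 4, 3, 1] := by
  refine ⟨rfl, ?_⟩
  intro i j hi hj
  simp only [List.length_cons, List.length_nil] at hi hj
  interval_cases i <;> interval_cases j <;> simp [List.getD] <;> omega

private lemma iso3142 (w1 w2 w3 w4 : ℕ) (h1 : w2 < w4) (h2 : w4 < w1) (h3 : w1 < w3) :
    OrderIsoList [w1, w2, w3, w4] [3, 1, 4, 2] := by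
  refine ⟨rfl, ?_⟩
  intro i j hi hj
  simp only [List.length_cons, List.length_nil] at hi hj
  interval_cases i <;> interval_cases j <;> simp [List.getD] <;> omega

private lemma four_sublist (p : List ℕ) (a b c d : ℕ) (hab : a < b) (hbc : b < c) (hcd : c < d)
    (hd : d < p.length) :
    [p.getD a 0, p.getD b 0, p.getD c 0, p.getD d 0].Sublist p := by
  have g : ℕ → ℕ := fun ix => 0
  refine List.sublist_of_orderEmbedding_getElem?_eq
    (OrderEmbedding.ofStrictMono
      (fun ix => match ix with
        | 0 => a | 1 => b | 2 => c | 3 => d | (k+4) => p.length + k)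
      (strictMono_nat_of_lt_succ ?_)) ?_
  · intro m
    match m with
    | 0 => exact hab
    | 1 => exact hbc
    | 2 => exact hcd
    | 3 => simpa using hd
    | (k+4) => simp
  · intro ix
    match ix with
    | 0 =>
      have ha : a < p.length := by omega
      show some (p.getD a 0) = p[a]?
      rw [List.getElem?_eq_getElem ha, List.getD_eq_getElem _ _ ha]
    | 1 =>
      have ha : b < p.length := by omega
      show some (p.getD b 0) = p[b]?
      rw [List.getElem?_eq_getElem ha, List.getD_eq_getElem _ _ ha]
    | 2 =>
      have ha : c < p.length := by omega
      show some (p.getD c 0) = p[c]?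
      rw [List.getElem?_eq_getElem ha, List.getD_eq_getElem _ _ ha]
    | 3 =>
      show some (p.getD d 0) = p[d]?
      rw [List.getElem?_eq_getElem hd, List.getD_eq_getElem _ _ hd]
    | (k+4) =>
      show (none : Option ℕ) = p[p.length + k]?
      exact (List.getElem?_eq_none (by omega)).symm

private lemma perm_mem_iff (p : List ℕ) (hp : IsPermList p) (v : ℕ) :
    v ∈ p ↔ 1 ≤ v ∧ v ≤ p.length := by
  rw [hp.mem_iff, List.mem_range'_1]
  omega

private lemma perm_nodup (p : List ℕ) (hp : IsPermList p) : p.Nodup :=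
  hp.nodup_iff.mpr (List.nodup_range')

private lemma kill_interval (p : List ℕ) (hp : IsPermList p) (hs : IsSimpleList p)
    (i j lo hi : ℕ) (hij : i < j) (hjn : j < p.length) (hproper : 0 < i ∨ j + 1 < p.length)
    (hcont : ∀ k, i ≤ k → k ≤ j → lo ≤ p.getD k 0 ∧ p.getD k 0 ≤ hi)
    (hcov : ∀ v, lo ≤ v → v ≤ hi → ∃ k, i ≤ k ∧ k ≤ j ∧ p.getD k 0 = v) : False := by
  set n := p.length with hn
  set len := j - i + 1 with hlen
  set L := (p.drop i).take len with hL
  have hLlen : L.length = len := by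
    simp only [hL, List.length_take, List.length_drop]
    omega
  have hLget : ∀ m (hm : m < len), L[m]'(by omega) = p.getD (i+m) 0 := by
    intro m hm
    have h1 : i + m < p.length := by omega
    rw [List.getD_eq_getElem _ _ h1]
    simp only [hL]
    rw [List.getElem_take, List.getElem_drop]
  have hmemL : ∀ v, v ∈ L ↔ ∃ k, i ≤ k ∧ k ≤ j ∧ p.getD k 0 = v := by
    intro v
    rw [List.mem_iff_getElem]
    constructor
    · rintro ⟨m, hm, he⟩
      rw [hLlen] at hm
      exact ⟨i + m, by omega, by omega, by rw [← hLget m hm]; exact he⟩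
    · rintro ⟨k, hk1, hk2, he⟩
      exact ⟨k - i, by omega, by rw [hLget (k-i) (by omega), show i + (k-i) = k from by omega]; exact he⟩
  have hLnd : L.Nodup :=
    ((List.take_sublist _ _).trans (List.drop_sublist _ _)).nodup (perm_nodup p hp)
  have hhi : lo ≤ hi := by
    have := hcont i (le_refl _) (by omega)
    omega
  have hperm : L.Perm (List.range' lo (hi + 1 - lo)) := by
    rw [List.perm_ext_iff_of_nodup hLnd (List.nodup_range')]
    intro v
    rw [hmemL, List.mem_range'_1]
    constructor
    · rintro ⟨k, hk1, hk2, he⟩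
      have := hcont k hk1 hk2
      omega
    · intro hv
      obtain ⟨k, hk1, hk2, he⟩ := hcov v (by omega) (by omega)
      exact ⟨k, hk1, hk2, he⟩
  have hlen2 : len = hi + 1 - lo := by
    have := hperm.length_eq
    rw [hLlen] at this
    simpa using this
  refine hs i len (by omega) (by omega) (by omega) ⟨lo, ?_⟩
  rw [← hL, hlen2]
  exact hperm

private lemma parAlt_length (m : ℕ) : (parAlt m).length = 2 * m := by
  simp [parAlt]
  omega

private lemma parAlt_get (m k : ℕ) (hk : k < (parAlt m).length) :
    (parAlt m)[k] = if k < m then 2*(k+1) else 2*(k-m)+1 := by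
  rw [parAlt_length] at hk
  unfold parAlt
  by_cases h : k < m
  · erw [List.getElem_append_left (by simpa using h)]
    rw [List.getElem_map, List.getElem_range'_1]
    simp [h]
    omega
  · erw [List.getElem_append_right (by simpa using h)]
    rw [List.getElem_map, List.getElem_range'_1]
    simp [h]
    omega


theorem stmt9 (p : List ℕ) (hp : IsPermList p) (hne : p ≠ []) (hs : IsSimpleList p)
    (h1 : AvoidsPat p [2, 4, 3, 1]) (h2 : AvoidsPat p [3, 1, 4, 2]) :
    p = [1] ∨ p = [1, 2] ∨ p = [2, 1] ∨ ∃ m, 2 ≤ m ∧ p = parAlt m := by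
  classical
  have hnodup := perm_nodup p hp
  have hb : ∀ k, k < p.length → 1 ≤ p.getD k 0 ∧ p.getD k 0 ≤ p.length := by
    intro k hk
    rw [List.getD_eq_getElem _ _ hk]
    exact (perm_mem_iff p hp _).1 (List.getElem_mem hk)
  have hinj : ∀ a b, a < p.length → b < p.length → p.getD a 0 = p.getD b 0 → a = b := by
    intro a b ha hb' he
    rw [List.getD_eq_getElem _ _ ha, List.getD_eq_getElem _ _ hb'] at he
    exact (hnodup.getElem_inj_iff).1 he
  have hsurj : ∀ v, 1 ≤ v → v ≤ p.length → ∃ k, k < p.length ∧ p.getD k 0 = v := by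
    intro v hv1 hv2
    have hv : v ∈ p := (perm_mem_iff p hp v).2 ⟨hv1, hv2⟩
    obtain ⟨k, hk, he⟩ := List.mem_iff_getElem.1 hv
    exact ⟨k, hk, by rw [List.getD_eq_getElem _ _ hk]; exact he⟩
  have hn1 : 1 ≤ p.length := by
    rcases p with _ | ⟨x, q⟩
    · exact absurd rfl hne
    · simp
  have hp' : p.Perm (List.range' 1 p.length) := hp
  rcases Nat.lt_or_ge p.length 3 with hsmall | hn3
  · have hcase : p.length = 1 ∨ p.length = 2 := by omega
    rcases hcase with hc | hc
    · obtain ⟨x, hx⟩ := List.length_eq_one_iff.1 hc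
      left
      have hr : List.range' 1 p.length = [1] := by rw [hc]; rfl
      rw [hr, hx] at hp'
      rw [hx]
      exact List.perm_singleton.1 hp'
    · obtain ⟨x, y, hxy⟩ := List.length_eq_two.1 hc
      have hr : List.range' 1 p.length = [1, 2] := by rw [hc]; rfl
      rw [hr, hxy] at hp'
      have hx : x = 1 ∨ x = 2 := by
        have : x ∈ [1, 2] := hp'.mem_iff.1 (by simp)
        simpa using this
      have hy : y = 1 ∨ y = 2 := by
        have : y ∈ [1, 2] := hp'.mem_iff.1 (by simp)
        simpa using this
      have hne' : x ≠ y := by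
        rw [hxy] at hnodup
        simpa using hnodup
      rcases hx with h | h <;> rcases hy with h' | h'
      · exact absurd (h.trans h'.symm) hne'
      · right; left; rw [hxy, h, h']
      · right; right; left; rw [hxy, h, h']
      · exact absurd (h.trans h'.symm) hne'
  · have hK1 : ∀ a b c d, a < b → b < c → c < d → d < p.length →
        p.getD d 0 < p.getD a 0 → p.getD a 0 < p.getD c 0 → p.getD c 0 < p.getD b 0 → False := by
      intro a b c d g1 g2 g3 g4 g5 g6 g7
      exact h1 ⟨_, four_sublist p a b c d g1 g2 g3 g4, iso2431 _ _ _ _ g5 g6 g7⟩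
    have hK2 : ∀ a b c d, a < b → b < c → c < d → d < p.length →
        p.getD b 0 < p.getD d 0 → p.getD d 0 < p.getD a 0 → p.getD a 0 < p.getD c 0 → False := by
      intro a b c d g1 g2 g3 g4 g5 g6 g7
      exact h2 ⟨_, four_sublist p a b c d g1 g2 g3 g4, iso3142 _ _ _ _ g5 g6 g7⟩
    have hKI : ∀ i j lo hi, i < j → j < p.length → (0 < i ∨ j + 1 < p.length) →
        (∀ k, i ≤ k → k ≤ j → lo ≤ p.getD k 0 ∧ p.getD k 0 ≤ hi) →
        (∀ v, lo ≤ v → v ≤ hi → ∃ k, i ≤ k ∧ k ≤ j ∧ p.getD k 0 = v) → False :=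
      fun i j lo hi g1 g2 g3 g4 g5 => kill_interval p hp hs i j lo hi g1 g2 g3 g4 g5
    obtain ⟨m, hm2, hnm, hA, hB⟩ :=
      corePerm p.length (fun k => p.getD k 0) hn3 hb hinj hsurj hK1 hK2 hKI
    right; right; right
    refine ⟨m, hm2, ?_⟩
    apply List.ext_getElem
    · rw [parAlt_length]; omega
    · intro k hk1 hk2
      rw [parAlt_get m k hk2]
      rw [← List.getD_eq_getElem _ 0 hk1]
      by_cases h : k < m
      · rw [if_pos h]
        have := hA k h
        omega
      · rw [if_neg h]
        have hkm : k - m < m := by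
          rw [parAlt_length] at hk2; omega
        have := hB (k - m) hkm
        rw [show m + (k - m) = k from by omega] at this
        omega
end

section
/- A permutation π can be sorted by the PS machine if and only if dividers can be inserted into π to obtain a divided permutation π₁|π₂|⋯|π_t avoiding the divided patterns 21 (within a single block), 2|13, and 2|3|1. -/
/-- `bs` is a division of `p`: a partition of `p` into consecutive nonempty blocks. -/
def IsDivision (p : List ℕ) (bs : List (List ℕ)) : Prop :=
  bs.flatten = p ∧ ∀ b ∈ bs, b ≠ []

/-- The divided permutation `bs` contains the divided pattern `qs`: one can pick, for each
block of `qs`, a subsequence of a block of `bs` (distinct blocks of `qs` going to distinct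
blocks of `bs`, in order) so that the concatenation of the picked subsequences is order
isomorphic to the concatenation of the blocks of `qs`. -/
def DividedContains (bs qs : List (List ℕ)) : Prop :=
  ∃ g : Fin qs.length → Fin bs.length, StrictMono g ∧
    ∃ ch : Fin qs.length → List ℕ,
      (∀ i, (ch i).Sublist (bs.get (g i))) ∧
      (∀ i, (ch i).length = (qs.get i).length) ∧
      OrderIsoList (List.ofFn ch).flatten qs.flatten

open List

section Helpers

/-- picking two positions of a list gives a 2-element sublist -/
lemma pair_get_sublist {α : Type*} : ∀ (l : List α) (i j : ℕ) (hij : i < j) (hj : j < l.length),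
    [l[i]'(by omega), l[j]'hj] <+ l := by
  intro l
  induction l with
  | nil => intro i j _ hj; simp at hj
  | cons a t ih =>
    intro i j hij hj
    match j, hj with
    | j+1, hj =>
      match i with
      | 0 =>
        simp only [List.getElem_cons_zero, List.getElem_cons_succ]
        exact (List.singleton_sublist.mpr (List.getElem_mem _)).cons₂ a
      | i+1 =>
        simp only [List.getElem_cons_succ]
        exact (ih i j (by omega) (by simpa using hj)).cons a

lemma triple_get_sublist {α : Type*} : ∀ (l : List α) (i j m : ℕ) (hij : i < j) (hjm : j < m)
    (hm : m < l.length),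
    [l[i]'(by omega), l[j]'(by omega), l[m]'hm] <+ l := by
  intro l
  induction l with
  | nil => intro i j m _ _ hm; simp at hm
  | cons a t ih =>
    intro i j m hij hjm hm
    match m, hm with
    | m+1, hm =>
      match j, hjm with
      | j+1, hjm =>
        match i with
        | 0 =>
          simp only [List.getElem_cons_zero, List.getElem_cons_succ]
          exact (pair_get_sublist t j m (by omega) (by simpa using hm)).cons₂ a
        | i+1 =>
          simp only [List.getElem_cons_succ]
          exact (ih i j m (by omega) (by omega) (by simpa using hm)).cons a

/-- in a `<`-sorted list, two members in increasing order form a sublist -/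
lemma pair_sublist_of_pairwise {l : List ℕ} (hl : l.Pairwise (· < ·)) {a b : ℕ}
    (ha : a ∈ l) (hb : b ∈ l) (hab : a < b) : [a, b] <+ l := by
  induction l with
  | nil => simp at ha
  | cons c t ih =>
    rcases List.pairwise_cons.mp hl with ⟨hc, ht⟩
    rcases List.mem_cons.mp ha with ha | ha
    · subst ha
      rcases List.mem_cons.mp hb with hb | hb
      · omega
      · exact (List.singleton_sublist.mpr hb).cons₂ a
    · rcases List.mem_cons.mp hb with hb | hb
      · have := hc a ha; omega
      · exact (ih ht ha hb).cons c

end Helpers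
section Translate

lemma flatten_ofFn_one (ch : Fin 1 → List ℕ) : (List.ofFn ch).flatten = ch 0 := by
  simp [List.ofFn_succ]

lemma flatten_ofFn_two (ch : Fin 2 → List ℕ) : (List.ofFn ch).flatten = ch 0 ++ ch 1 := by
  simp [List.ofFn_succ]

lemma flatten_ofFn_three (ch : Fin 3 → List ℕ) :
    (List.ofFn ch).flatten = ch 0 ++ ch 1 ++ ch 2 := by
  simp [List.ofFn_succ, List.append_assoc]

lemma d21_iff (bs : List (List ℕ)) :
    DividedContains bs [[2, 1]] ↔ ∃ b ∈ bs, ∃ a c : ℕ, [a, c] <+ b ∧ c < a := by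
  constructor
  · rintro ⟨g, hg, ch, hsub, hlen, hiso⟩
    have h2 : (ch (0 : Fin 1)).length = 2 := by simpa using hlen (0 : Fin 1)
    obtain ⟨a, c, hch⟩ := List.length_eq_two.mp h2
    have hiso' : OrderIsoList (List.ofFn (fun i : Fin 1 => ch i)).flatten [2, 1] := hiso
    rw [flatten_ofFn_one] at hiso'
    simp only [hch] at hiso'
    obtain ⟨-, hcmp⟩ := hiso'
    have hca : c < a := by simpa using hcmp 1 0 (by simp) (by simp)
    exact ⟨bs.get (g (0 : Fin 1)), bs.get_mem _, a, c, hch ▸ hsub (0 : Fin 1), hca⟩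
  · rintro ⟨b, hb, a, c, hsub, hlt⟩
    obtain ⟨i, hi⟩ := List.mem_iff_get.mp hb
    refine ⟨(fun _ => i : Fin 1 → Fin bs.length), ?_, (fun _ => [a, c] : Fin 1 → List ℕ),
      ?_, ?_, ?_⟩
    · intro x y hxy
      have : x = y := Subsingleton.elim (α := Fin 1) x y
      simp [this] at hxy
    · intro j; exact hi ▸ hsub
    · intro j
      have : j = (0 : Fin 1) := Subsingleton.elim (α := Fin 1) j _
      simp [this]
    · have : (List.ofFn (fun _ : Fin 1 => [a, c])).flatten = [a, c] := flatten_ofFn_one _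
      refine ⟨by simp [this], fun i j hi hj => ?_⟩
      rw [this] at hi hj ⊢
      simp only [List.length_cons, List.length_nil] at hi hj
      interval_cases i <;> interval_cases j <;> simp [List.getD] <;> omega

lemma d13_iff (bs : List (List ℕ)) :
    DividedContains bs [[2], [1, 3]] ↔
      ∃ b₁ b₂, [b₁, b₂] <+ bs ∧ ∃ y ∈ b₁, ∃ z x : ℕ, [z, x] <+ b₂ ∧ z < y ∧ y < x := by
  constructor
  · rintro ⟨g, hg, ch, hsub, hlen, hiso⟩
    have h1 : (ch (0 : Fin 2)).length = 1 := by simpa using hlen (0 : Fin 2)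
    have h2 : (ch (1 : Fin 2)).length = 2 := by simpa using hlen (1 : Fin 2)
    obtain ⟨y, hch0⟩ := List.length_eq_one_iff.mp h1
    obtain ⟨z, x, hch1⟩ := List.length_eq_two.mp h2
    have hiso' : OrderIsoList (List.ofFn (fun i : Fin 2 => ch i)).flatten [2, 1, 3] := hiso
    rw [flatten_ofFn_two] at hiso'
    simp only [hch0, hch1] at hiso'
    obtain ⟨-, hcmp⟩ := hiso'
    have hzy : z < y := by simpa using hcmp 1 0 (by simp) (by simp)
    have hyx : y < x := by simpa using hcmp 0 2 (by simp) (by simp)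
    have hgg : ((g (0 : Fin 2)) : ℕ) < ((g (1 : Fin 2)) : ℕ) := hg (by decide)
    have hpair : [bs.get (g (0 : Fin 2)), bs.get (g (1 : Fin 2))] <+ bs := by
      simpa [List.get_eq_getElem] using
        pair_get_sublist bs (g (0 : Fin 2)) (g (1 : Fin 2)) hgg (g (1 : Fin 2)).isLt
    refine ⟨bs.get (g (0 : Fin 2)), bs.get (g (1 : Fin 2)), hpair, y, ?_, z, x,
      hch1 ▸ hsub (1 : Fin 2), hzy, hyx⟩
    exact (hch0 ▸ hsub (0 : Fin 2)).subset (by simp)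
  · rintro ⟨b₁, b₂, hsub, y, hy, z, x, hzx, hzy, hyx⟩
    obtain ⟨is, heq, hpw⟩ := List.sublist_eq_map_getElem hsub
    have hlis : is.length = 2 := by
      have := congrArg List.length heq; simpa using this.symm
    obtain ⟨i₁, i₂, his⟩ := List.length_eq_two.mp hlis
    subst his
    simp only [List.map_cons, List.map_nil, List.cons.injEq, and_true] at heq
    obtain ⟨hb₁, hb₂⟩ := heq
    have hi12 : i₁ < i₂ := by
      have := List.pairwise_cons.mp hpw
      exact this.1 i₂ (by simp)
    refine ⟨(![i₁, i₂] : Fin 2 → Fin bs.length), ?_, (![[y], [z, x]] : Fin 2 → List ℕ),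
      ?_, ?_, ?_⟩
    · intro u v huv
      fin_cases u <;> fin_cases v <;>
        first
          | exact absurd huv (by decide)
          | simpa using hi12
    · intro j
      fin_cases j
      · simpa [hb₁] using List.singleton_sublist.mpr hy
      · simpa [hb₂] using hzx
    · intro j; fin_cases j <;> simp
    · have : (List.ofFn (![[y], [z, x]] : Fin 2 → List ℕ)).flatten = [y, z, x] := by
        rw [flatten_ofFn_two]; simp
      refine ⟨by simp [this], fun i j hi hj => ?_⟩
      rw [this] at hi hj ⊢
      simp only [List.length_cons, List.length_nil] at hi hj
      interval_cases i <;> interval_cases j <;> simp [List.getD] <;> omega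

lemma d231_iff (bs : List (List ℕ)) :
    DividedContains bs [[2], [3], [1]] ↔
      ∃ b₁ b₂ b₃, [b₁, b₂, b₃] <+ bs ∧ ∃ y ∈ b₁, ∃ x ∈ b₂, ∃ z ∈ b₃, z < y ∧ y < x := by
  constructor
  · rintro ⟨g, hg, ch, hsub, hlen, hiso⟩
    have h1 : (ch (0 : Fin 3)).length = 1 := by simpa using hlen (0 : Fin 3)
    have h2 : (ch (1 : Fin 3)).length = 1 := by simpa using hlen (1 : Fin 3)
    have h3 : (ch (2 : Fin 3)).length = 1 := by simpa using hlen (2 : Fin 3)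
    obtain ⟨y, hch0⟩ := List.length_eq_one_iff.mp h1
    obtain ⟨x, hch1⟩ := List.length_eq_one_iff.mp h2
    obtain ⟨z, hch2⟩ := List.length_eq_one_iff.mp h3
    have hiso' : OrderIsoList (List.ofFn (fun i : Fin 3 => ch i)).flatten [2, 3, 1] := hiso
    rw [flatten_ofFn_three] at hiso'
    simp only [hch0, hch1, hch2] at hiso'
    obtain ⟨-, hcmp⟩ := hiso'
    have hzy : z < y := by simpa using hcmp 2 0 (by simp) (by simp)
    have hyx : y < x := by simpa using hcmp 0 1 (by simp) (by simp)
    have h01 : ((g (0 : Fin 3)) : ℕ) < ((g (1 : Fin 3)) : ℕ) := hg (by decide)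
    have h12 : ((g (1 : Fin 3)) : ℕ) < ((g (2 : Fin 3)) : ℕ) := hg (by decide)
    have htrip : [bs.get (g (0 : Fin 3)), bs.get (g (1 : Fin 3)), bs.get (g (2 : Fin 3))]
        <+ bs := by
      simpa [List.get_eq_getElem] using
        triple_get_sublist bs (g (0 : Fin 3)) (g (1 : Fin 3)) (g (2 : Fin 3)) h01 h12
          (g (2 : Fin 3)).isLt
    refine ⟨_, _, _, htrip, y, ?_, x, ?_, z, ?_, hzy, hyx⟩
    · exact (hch0 ▸ hsub (0 : Fin 3)).subset (by simp)
    · exact (hch1 ▸ hsub (1 : Fin 3)).subset (by simp)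
    · exact (hch2 ▸ hsub (2 : Fin 3)).subset (by simp)
  · rintro ⟨b₁, b₂, b₃, hsub, y, hy, x, hx, z, hz, hzy, hyx⟩
    obtain ⟨is, heq, hpw⟩ := List.sublist_eq_map_getElem hsub
    have hlis : is.length = 3 := by
      have := congrArg List.length heq; simpa using this.symm
    obtain ⟨i₁, i₂, i₃, his⟩ := List.length_eq_three.mp hlis
    subst his
    simp only [List.map_cons, List.map_nil, List.cons.injEq, and_true] at heq
    obtain ⟨hb₁, hb₂, hb₃⟩ := heq
    have h12 : i₁ < i₂ := by
      have := List.pairwise_cons.mp hpw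
      exact this.1 i₂ (by simp)
    have h23 : i₂ < i₃ := by
      have := List.pairwise_cons.mp (List.pairwise_cons.mp hpw).2
      exact this.1 i₃ (by simp)
    refine ⟨(![i₁, i₂, i₃] : Fin 3 → Fin bs.length), ?_, (![[y], [x], [z]] : Fin 3 → List ℕ),
      ?_, ?_, ?_⟩
    · intro u v huv
      fin_cases u <;> fin_cases v <;>
        first
          | exact absurd huv (by decide)
          | simpa using h12
          | simpa using h23
          | simpa using h12.trans h23
    · intro j
      fin_cases j
      · simpa [hb₁] using List.singleton_sublist.mpr hy
      · simpa [hb₂] using List.singleton_sublist.mpr hx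
      · simpa [hb₃] using List.singleton_sublist.mpr hz
    · intro j; fin_cases j <;> simp
    · have : (List.ofFn (![[y], [x], [z]] : Fin 3 → List ℕ)).flatten = [y, x, z] := by
        rw [flatten_ofFn_three]; simp
      refine ⟨by simp [this], fun i j hi hj => ?_⟩
      rw [this] at hi hj ⊢
      simp only [List.length_cons, List.length_nil] at hi hj
      interval_cases i <;> interval_cases j <;> simp [List.getD] <;> omega

end Translate
section Machine

/-- no pattern 2|13 among the blocks -/
def NoP13 (bs : List (List ℕ)) : Prop :=
  ∀ b₁ b₂, [b₁, b₂] <+ bs → ∀ y ∈ b₁, ∀ z x : ℕ, [z, x] <+ b₂ → ¬(z < y ∧ y < x)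

/-- no pattern 2|3|1 among the blocks -/
def NoP231 (bs : List (List ℕ)) : Prop :=
  ∀ b₁ b₂ b₃, [b₁, b₂, b₃] <+ bs → ∀ y ∈ b₁, ∀ x ∈ b₂, ∀ z ∈ b₃, ¬(z < y ∧ y < x)

/-- no pattern 2|13 with the `2` on the stack -/
def W13 (st : List ℕ) (bs : List (List ℕ)) : Prop :=
  ∀ y ∈ st, ∀ b ∈ bs, ∀ z x : ℕ, [z, x] <+ b → ¬(z < y ∧ y < x)

/-- no pattern 2|3|1 with the `2` on the stack -/
def W231 (st : List ℕ) (bs : List (List ℕ)) : Prop :=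
  ∀ y ∈ st, ∀ b₂ b₃, [b₂, b₃] <+ bs → ∀ x ∈ b₂, ∀ z ∈ b₃, ¬(z < y ∧ y < x)

lemma steps_push (B : List ℕ) : ∀ (inp ps st out : List ℕ),
    Relation.ReflTransGen PSStep (B ++ inp, ps, st, out) (inp, B.reverse ++ ps, st, out) := by
  induction B with
  | nil => intro inp ps st out; simp; exact Relation.ReflTransGen.refl
  | cons x B ih =>
    intro inp ps st out
    refine Relation.ReflTransGen.head (PSStep.input x (B ++ inp) ps st out) ?_
    have := ih inp (x :: ps) st out
    simpa using this

lemma steps_block (B : List ℕ) (hB : B ≠ []) (inp st out : List ℕ) :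
    Relation.ReflTransGen PSStep (B ++ inp, [], st, out) (inp, [], B ++ st, out) := by
  refine (steps_push B inp [] st out).tail ?_
  have h := PSStep.transfer inp (B.reverse ++ []) st out (by simpa using hB)
  simpa using h

lemma range'_snoc (k : ℕ) : List.range' 1 k ++ [k + 1] = List.range' 1 (k + 1) := by
  rw [List.range'_concat]
  simp [Nat.add_comm]

lemma steps_popRange : ∀ (m k : ℕ) (inp ps : List ℕ),
    Relation.ReflTransGen PSStep (inp, ps, List.range' (k + 1) m, List.range' 1 k)
      (inp, ps, [], List.range' 1 (k + m)) := by
  intro m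
  induction m with
  | zero => intro k inp ps; simp; exact Relation.ReflTransGen.refl
  | succ m ih =>
    intro k inp ps
    rw [List.range'_succ]
    refine Relation.ReflTransGen.head (PSStep.output inp ps _ _ (k + 1)) ?_
    rw [range'_snoc k]
    have := ih (k + 1) inp ps
    simpa [Nat.add_assoc, Nat.add_comm, Nat.add_left_comm] using this

lemma steps_popAll : ∀ (st : List ℕ) (k : ℕ) (inp : List ℕ),
    st.Pairwise (· < ·) → (∀ y ∈ st, k < y) →
    ∃ m st₂, st = List.range' (k + 1) m ++ st₂ ∧ (∀ y ∈ st₂, k + m + 1 < y) ∧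
      Relation.ReflTransGen PSStep (inp, [], st, List.range' 1 k)
        (inp, [], st₂, List.range' 1 (k + m)) := by
  intro st
  induction st with
  | nil =>
    intro k inp _ _
    exact ⟨0, [], by simp, by simp, by simpa using Relation.ReflTransGen.refl⟩
  | cons y t ih =>
    intro k inp hpw hmem
    rcases List.pairwise_cons.mp hpw with ⟨hy, ht⟩
    by_cases hcase : y = k + 1
    · subst hcase
      have step1 : Relation.ReflTransGen PSStep (inp, [], (k+1) :: t, List.range' 1 k)
          (inp, [], t, List.range' 1 (k+1)) := by
        refine Relation.ReflTransGen.single ?_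
        have := PSStep.output inp [] t (List.range' 1 k) (k + 1)
        rwa [range'_snoc k] at this
      obtain ⟨m, st₂, hsp, hmem2, hsteps⟩ := ih (k + 1) inp ht (fun z hz => hy z hz)
      refine ⟨m + 1, st₂, ?_, ?_, step1.trans (by simpa [Nat.add_assoc, Nat.add_comm,
        Nat.add_left_comm] using hsteps)⟩
      · rw [List.range'_succ]
        simp only [List.cons_append, List.cons.injEq, true_and]
        exact hsp
      · intro z hz; have := hmem2 z hz; omega
    · refine ⟨0, y :: t, by simp, ?_, by simpa using Relation.ReflTransGen.refl⟩
      intro z hz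
      rcases List.mem_cons.mp hz with rfl | hz
      · have := hmem z (by simp); omega
      · have := hy z hz
        have := hmem y (by simp)
        omega

end Machine
section Run

instance : IsAntisymm ℕ (· < ·) := ⟨fun _ _ h h' => absurd h (Nat.lt_asymm h')⟩

lemma run_lemma (n : ℕ) (bs : List (List ℕ)) : ∀ (st : List ℕ) (k : ℕ), k ≤ n →
    st.Pairwise (· < ·) → (∀ b ∈ bs, b ≠ []) → (∀ b ∈ bs, b.Pairwise (· < ·)) →
    NoP13 bs → NoP231 bs → W13 st bs → W231 st bs →
    (st ++ bs.flatten).Perm (List.range' (k + 1) (n - k)) →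
    Relation.ReflTransGen PSStep (bs.flatten, [], st, List.range' 1 k)
      ([], [], [], List.range' 1 n) := by
  induction bs with
  | nil =>
    intro st k hkn hpw _ _ _ _ _ _ hperm
    simp only [List.flatten_nil, List.append_nil] at hperm ⊢
    have hsorted : st = List.range' (k + 1) (n - k) :=
      List.Perm.eq_of_pairwise (fun _ _ _ _ h h' => absurd h (Nat.lt_asymm h')) hpw List.pairwise_lt_range' hperm
    subst hsorted
    have := steps_popRange (n - k) k [] []
    rwa [Nat.add_sub_cancel' hkn] at this
  | cons B bs' ih =>
    intro st k hkn hpw hne hincr hP13 hP231 hW13 hW231 hperm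
    simp only [List.flatten_cons] at hperm ⊢
    -- all remaining values are > k
    have hmem : ∀ y ∈ st, k < y := by
      intro y hy
      have : y ∈ List.range' (k + 1) (n - k) :=
        hperm.mem_iff.mp (List.mem_append_left _ hy)
      have := List.mem_range'_1.mp this
      omega
    obtain ⟨m, st₂, hsp, hm2, hsteps⟩ := steps_popAll st k (B ++ bs'.flatten) hpw hmem
    -- lengths
    have hlenst : st.length = m + st₂.length := by
      have := congrArg List.length hsp; simpa using this
    have hlen : st.length + (B.length + bs'.flatten.length) = n - k := by
      have := hperm.length_eq
      simpa using this
    have hBpos : 0 < B.length := List.length_pos_iff.mpr (hne B (by simp))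
    have hk2n : k + m < n := by
      omega
    -- the next needed value is in the input
    have hzmem : (k + m + 1) ∈ B ∨ (k + m + 1) ∈ bs'.flatten := by
      have h1 : (k + m + 1) ∈ List.range' (k + 1) (n - k) :=
        List.mem_range'_1.mpr ⟨by omega, by omega⟩
      have h2 : (k + m + 1) ∈ st ++ (B ++ bs'.flatten) := hperm.mem_iff.mpr h1
      rcases List.mem_append.mp h2 with h3 | h3
      · exfalso
        rw [hsp] at h3
        rcases List.mem_append.mp h3 with h4 | h4
        · have := List.mem_range'_1.mp h4; omega
        · have := hm2 _ h4; omega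
      · exact List.mem_append.mp h3
    have hnd : (st ++ (B ++ bs'.flatten)).Nodup :=
      hperm.nodup_iff.mpr List.nodup_range'
    have hst₂st : ∀ y ∈ st₂, y ∈ st := by
      intro y hy; rw [hsp]; exact List.mem_append_right _ hy
    -- key: every element of B is below every remaining stack element
    have hkey : ∀ x ∈ B, ∀ y ∈ st₂, x < y := by
      intro x hx y hy
      by_contra hcon
      have hyx : y ≠ x := by
        have hdisj := (List.nodup_append.mp hnd).2.2
        exact fun h => hdisj y (hst₂st y hy) x (List.mem_append_left _ hx) h
      have hylt : y < x := by omega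
      have hzy : k + m + 1 < y := hm2 y hy
      rcases hzmem with hzB | hzF
      · have hpair : [k + m + 1, x] <+ B :=
          pair_sublist_of_pairwise (hincr B (by simp)) hzB hx (by omega)
        exact hW13 y (hst₂st y hy) B (by simp) (k + m + 1) x hpair ⟨by omega, by omega⟩
      · obtain ⟨b₃, hb₃, hzb₃⟩ := List.mem_flatten.mp hzF
        have hsub : [B, b₃] <+ B :: bs' := (List.singleton_sublist.mpr hb₃).cons₂ B
        exact hW231 y (hst₂st y hy) B b₃ hsub x hx (k + m + 1) hzb₃ ⟨by omega, by omega⟩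
    have hpw₂ : st₂.Pairwise (· < ·) := by
      rw [hsp] at hpw; exact (List.pairwise_append.mp hpw).2.1
    have hpw₃ : (B ++ st₂).Pairwise (· < ·) :=
      List.pairwise_append.mpr ⟨hincr B (by simp), hpw₂, hkey⟩
    -- permutation invariant for the recursive call
    have hre : List.range' (k + 1) (n - k) =
        List.range' (k + 1) m ++ List.range' (k + m + 1) (n - (k + m)) := by
      rw [show n - k = n - (k + m) + m from by omega,
        show k + m + 1 = k + 1 + m from by omega]
      have h := List.range'_append (s := k + 1) (m := m) (n := n - (k + m)) (step := 1)
      simpa [Nat.add_comm] using h.symm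
    have hperm₂ : (st₂ ++ (B ++ bs'.flatten)).Perm (List.range' (k + m + 1) (n - (k + m))) := by
      rw [hsp, hre] at hperm
      rw [List.append_assoc] at hperm
      exact (List.perm_append_left_iff _).mp hperm
    have hperm₃ : ((B ++ st₂) ++ bs'.flatten).Perm (List.range' (k + m + 1) (n - (k + m))) := by
      refine List.Perm.trans ?_ hperm₂
      calc (B ++ st₂) ++ bs'.flatten ~ (st₂ ++ B) ++ bs'.flatten :=
            (List.perm_append_comm).append_right bs'.flatten
        _ = st₂ ++ (B ++ bs'.flatten) := List.append_assoc _ _ _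
    -- invariants for the recursive call
    have hW13' : W13 (B ++ st₂) bs' := by
      intro y hy b hb z x hzx
      rcases List.mem_append.mp hy with hyB | hy2
      · exact hP13 B b ((List.singleton_sublist.mpr hb).cons₂ B) y hyB z x hzx
      · exact hW13 y (hst₂st y hy2) b (by simp [hb]) z x hzx
    have hW231' : W231 (B ++ st₂) bs' := by
      intro y hy b₂ b₃ hsub x hx z hz
      rcases List.mem_append.mp hy with hyB | hy2
      · exact hP231 B b₂ b₃ (hsub.cons₂ B) y hyB x hx z hz
      · exact hW231 y (hst₂st y hy2) b₂ b₃ (hsub.trans (List.sublist_cons_self B bs')) x hx z hz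
    have hP13' : NoP13 bs' := fun b₁ b₂ hsub =>
      hP13 b₁ b₂ (hsub.trans (List.sublist_cons_self B bs'))
    have hP231' : NoP231 bs' := fun b₁ b₂ b₃ hsub =>
      hP231 b₁ b₂ b₃ (hsub.trans (List.sublist_cons_self B bs'))
    -- assemble the run
    have s2 : Relation.ReflTransGen PSStep (B ++ bs'.flatten, [], st₂, List.range' 1 (k + m))
        (bs'.flatten, [], B ++ st₂, List.range' 1 (k + m)) :=
      steps_block B (hne B (by simp)) bs'.flatten st₂ _
    have s3 := ih (B ++ st₂) (k + m) (by omega) hpw₃ (fun b hb => hne b (by simp [hb]))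
      (fun b hb => hincr b (by simp [hb])) hP13' hP231' hW13' hW231' hperm₃
    exact (hsteps.trans s2).trans s3

end Run
section Forward

/-- the invariant maintained (backwards) along a successful sorting run -/
def InvF (inp ps st out : List ℕ) : Prop :=
  ∃ k bs, out = List.range' 1 k ∧ bs.flatten = ps.reverse ++ inp ∧
    (∀ b ∈ bs, b ≠ []) ∧ (∀ b ∈ bs, b.Pairwise (· < ·)) ∧ st.Pairwise (· < ·) ∧
    (∀ y ∈ st, k < y) ∧ (∀ y ∈ ps, k < y) ∧ (∀ y ∈ inp, k < y) ∧
    NoP13 bs ∧ NoP231 bs ∧ W13 st bs ∧ W231 st bs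

lemma fwd_invariant (n : ℕ) : ∀ s : List ℕ × List ℕ × List ℕ × List ℕ,
    Relation.ReflTransGen PSStep s ([], [], [], List.range' 1 n) →
    InvF s.1 s.2.1 s.2.2.1 s.2.2.2 := by
  intro s h
  induction h using Relation.ReflTransGen.head_induction_on with
  | refl =>
    refine ⟨n, [], rfl, by simp, by simp, by simp, by simp, by simp, by simp, by simp,
      ?_, ?_, ?_, ?_⟩
    · intro b₁ b₂ hs; simp at hs
    · intro b₁ b₂ b₃ hs; simp at hs
    · intro y hy; simp at hy
    · intro y hy; simp at hy
  | head h' _ ih =>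
    cases h' with
    | input x inp ps st out =>
      obtain ⟨k, bs, hout, hflat, hne, hincr, hpw, hst, hps, hinp, h13, h231, hw13, hw231⟩ := ih
      refine ⟨k, bs, hout, ?_, hne, hincr, hpw, hst, ?_, ?_, h13, h231, hw13, hw231⟩
      · rw [hflat]; simp
      · intro y hy; exact hps y (by simp [hy])
      · intro y hy
        rcases List.mem_cons.mp hy with rfl | hy
        · exact hps y (by simp)
        · exact hinp y hy
    | transfer inp ps st out hps0 =>
      obtain ⟨k, bs, hout, hflat, hne, hincr, hpw, hst, hps, hinp, h13, h231, hw13, hw231⟩ := ih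
      simp only [List.reverse_nil, List.nil_append] at hflat
      have hcross : ∀ x ∈ ps.reverse, ∀ y ∈ st, x < y :=
        (List.pairwise_append.mp hpw).2.2
      refine ⟨k, ps.reverse :: bs, hout, by simp [hflat], ?_, ?_, ?_, ?_, ?_, hinp,
        ?_, ?_, ?_, ?_⟩
      · intro b hb
        rcases List.mem_cons.mp hb with rfl | hb
        · simpa using hps0
        · exact hne b hb
      · intro b hb
        rcases List.mem_cons.mp hb with rfl | hb
        · exact (List.pairwise_append.mp hpw).1
        · exact hincr b hb
      · exact (List.pairwise_append.mp hpw).2.1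
      · intro y hy; exact hst y (List.mem_append_right _ hy)
      · intro y hy; exact hst y (List.mem_append_left _ (by simpa using hy))
      · -- NoP13
        intro b₁ b₂ hs
        rcases List.sublist_cons_iff.mp hs with hs | ⟨r, heq, hr⟩
        · exact h13 b₁ b₂ hs
        · obtain ⟨rfl, rfl⟩ : b₁ = ps.reverse ∧ r = [b₂] := by
            constructor <;> injection heq with h1 h2 <;> simp_all
          intro y hy z x hzx
          exact hw13 y (List.mem_append_left _ hy) b₂ (List.singleton_sublist.mp hr) z x hzx
      · -- NoP231
        intro b₁ b₂ b₃ hs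
        rcases List.sublist_cons_iff.mp hs with hs | ⟨r, heq, hr⟩
        · exact h231 b₁ b₂ b₃ hs
        · obtain ⟨rfl, rfl⟩ : b₁ = ps.reverse ∧ r = [b₂, b₃] := by
            constructor <;> injection heq with h1 h2 <;> simp_all
          intro y hy x hx z hz
          exact hw231 y (List.mem_append_left _ hy) b₂ b₃ hr x hx z hz
      · -- W13
        intro y hy b hb z x hzx
        rcases List.mem_cons.mp hb with rfl | hb
        · intro ⟨_, hyx⟩
          have hxy := hcross x (hzx.subset (by simp)) y hy
          omega
        · exact hw13 y (List.mem_append_right _ hy) b hb z x hzx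
      · -- W231
        intro y hy b₂ b₃ hs x hx z hz
        rcases List.sublist_cons_iff.mp hs with hs | ⟨r, heq, hr⟩
        · exact hw231 y (List.mem_append_right _ hy) b₂ b₃ hs x hx z hz
        · obtain ⟨rfl, rfl⟩ : b₂ = ps.reverse ∧ r = [b₃] := by
            constructor <;> injection heq with h1 h2 <;> simp_all
          intro ⟨_, hyx⟩
          have hxy := hcross x hx y hy
          omega
    | output inp ps st out x =>
      obtain ⟨k, bs, hout, hflat, hne, hincr, hpw, hst, hps, hinp, h13, h231, hw13, hw231⟩ := ih
      have hk : k ≠ 0 := by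
        intro h; rw [h] at hout; simp at hout
      have hsplit : out = List.range' 1 (k - 1) ∧ x = k := by
        have h1 : List.range' 1 (k - 1) ++ [k - 1 + 1] = List.range' 1 (k - 1 + 1) :=
          range'_snoc (k - 1)
        rw [show k - 1 + 1 = k from by omega] at h1
        rw [← h1] at hout
        obtain ⟨h2, h3⟩ := List.append_inj' hout rfl
        exact ⟨h2, by simpa using h3⟩
      obtain ⟨hout', rfl⟩ := hsplit
      have hmemflat : ∀ z, z ∈ bs.flatten → x < z := by
        intro z hz
        rw [hflat] at hz
        rcases List.mem_append.mp hz with hz | hz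
        · exact hps z (by simpa using hz)
        · exact hinp z hz
      refine ⟨x - 1, bs, hout', hflat, hne, hincr, ?_, ?_, ?_, ?_, h13, h231, ?_, ?_⟩
      · exact List.pairwise_cons.mpr ⟨fun y hy => hst y hy, hpw⟩
      · intro y hy
        rcases List.mem_cons.mp hy with rfl | hy
        · omega
        · have := hst y hy; omega
      · intro y hy; have := hps y hy; omega
      · intro y hy; have := hinp y hy; omega
      · -- W13
        intro y hy b hb z x' hzx
        rcases List.mem_cons.mp hy with hyx | hy
        · intro ⟨hzy, _⟩
          have hxz := hmemflat z (List.mem_flatten.mpr ⟨b, hb, hzx.subset (by simp)⟩)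
          omega
        · exact hw13 y hy b hb z x' hzx
      · -- W231
        intro y hy b₂ b₃ hs x' hx' z hz
        rcases List.mem_cons.mp hy with hyx | hy
        · intro ⟨hzy, _⟩
          have hb₃ : b₃ ∈ bs := hs.subset (by simp)
          have hxz := hmemflat z (List.mem_flatten.mpr ⟨b₃, hb₃, hz⟩)
          omega
        · exact hw231 y hy b₂ b₃ hs x' hx' z hz

end Forward
theorem stmt14 (p : List ℕ) (hp : IsPermList p) :
    PSSortable p ↔
      ∃ bs, IsDivision p bs ∧ ¬ DividedContains bs [[2, 1]] ∧
        ¬ DividedContains bs [[2], [1, 3]] ∧ ¬ DividedContains bs [[2], [3], [1]] := by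
  constructor
  · intro hps
    obtain ⟨k, bs, hout, hflat, hne, hincr, _, _, _, _, h13, h231, _, _⟩ :=
      fwd_invariant p.length (p, [], [], []) hps
    simp only [List.reverse_nil, List.nil_append] at hflat
    refine ⟨bs, ⟨hflat, hne⟩, ?_, ?_, ?_⟩
    · rw [d21_iff]
      rintro ⟨b, hb, a, c, hsub, hlt⟩
      have := List.pairwise_iff_forall_sublist.mp (hincr b hb) hsub
      omega
    · rw [d13_iff]
      rintro ⟨b₁, b₂, hsub, y, hy, z, x, hzx, hzy, hyx⟩
      exact h13 b₁ b₂ hsub y hy z x hzx ⟨hzy, hyx⟩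
    · rw [d231_iff]
      rintro ⟨b₁, b₂, b₃, hsub, y, hy, x, hx, z, hz, hzy, hyx⟩
      exact h231 b₁ b₂ b₃ hsub y hy x hx z hz ⟨hzy, hyx⟩
  · rintro ⟨bs, ⟨hflat, hne⟩, h21, h13, h231⟩
    have hnodup : p.Nodup := hp.nodup_iff.mpr List.nodup_range'
    have hincr : ∀ b ∈ bs, b.Pairwise (· < ·) := by
      intro b hb
      refine List.pairwise_iff_forall_sublist.mpr ?_
      intro a c hsub
      have hbp : b <+ p := hflat ▸ List.sublist_flatten_of_mem hb
      have hac : a ≠ c := by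
        have := (hsub.trans hbp).nodup hnodup
        simp at this
        exact this
      have hnlt : ¬ c < a := fun hlt => h21 ((d21_iff bs).mpr ⟨b, hb, a, c, hsub, hlt⟩)
      omega
    have hP13 : NoP13 bs := by
      intro b₁ b₂ hsub y hy z x hzx ⟨hzy, hyx⟩
      exact h13 ((d13_iff bs).mpr ⟨b₁, b₂, hsub, y, hy, z, x, hzx, hzy, hyx⟩)
    have hP231 : NoP231 bs := by
      intro b₁ b₂ b₃ hsub y hy x hx z hz ⟨hzy, hyx⟩
      exact h231 ((d231_iff bs).mpr ⟨b₁, b₂, b₃, hsub, y, hy, x, hx, z, hz, hzy, hyx⟩)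
    have hrun := run_lemma p.length bs [] 0 (Nat.zero_le _) (by simp) hne hincr hP13 hP231
      (by intro y hy; simp at hy) (by intro y hy; simp at hy)
      (by simpa [hflat, IsPermList] using hp)
    unfold PSSortable
    rw [show (List.range' 1 0 : List ℕ) = [] from rfl] at hrun
    rw [hflat] at hrun
    exact hrun
end
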